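/- arXiv:1805.11379 — 2 statements merged into one kernel-verified Lean document; each statement's English description precedes it below -/
import Mathlib

section
/- Let G be a finite group, let E be a group, and let π : E → G be a surjective group homomorphism whose kernel M is abelian. Regard M (written additively) as a module over the group ring ℤ[G], where g ∈ G acts on M by conjugation by any preimage of g in E (this action is well defined because M is abelian). If M is a free ℤ[G]-module, then the extension splits: there exists a group homomorphism s : G → E with π ∘ s = id_G. In particular s is injective, so G embeds in E, and π restricted to the image of s is an isomorphism onto G. -/
/-- Let `G` be a finite group, `π : E → G` a surjective homomorphism whose
kernel is abelian, identified (via `j`) with a `ℤ[G]`-module `M` on which `g ∈ G` acts as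
conjugation by any preimage of `g` in `E`. If `M` is a free `ℤ[G]`-module, then the extension
splits: there is a homomorphism `s : G → E` with `π ∘ s = id`; in particular `s` is injective,
so `G` embeds in `E`. -/
theorem splitting_of_free_kernel (G E M : Type*) [Group G] [Finite G] [Group E]
    [AddCommGroup M] [Module (MonoidAlgebra ℤ G) M]
    (π : E →* G) (hπ : Function.Surjective π)
    (j : M → E)
    (hjmem : ∀ x : M, j x ∈ MonoidHom.ker π)
    (hjinj : Function.Injective j)
    (hjsurj : ∀ e ∈ MonoidHom.ker π, ∃ x : M, j x = e)
    (hjadd : ∀ a b : M, j (a + b) = j a * j b)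
    (hact : ∀ (g : G) (e : E), π e = g → ∀ x : M,
      j ((MonoidAlgebra.single g (1 : ℤ) : MonoidAlgebra ℤ G) • x) = e * j x * e⁻¹)
    (hfree : Module.Free (MonoidAlgebra ℤ G) M) :
    ∃ s : G →* E, π.comp s = MonoidHom.id G ∧ Function.Injective s := by
  classical
  cases nonempty_fintype G
  haveI := hfree
  -- basic properties of j
  have hj0 : j 0 = 1 := by
    have h := hjadd 0 0
    rw [add_zero] at h
    exact (mul_eq_left.mp h.symm)
  have hjneg : ∀ a : M, j (-a) = (j a)⁻¹ := by
    intro a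
    have h := hjadd a (-a)
    rw [add_neg_cancel, hj0] at h
    exact (eq_inv_of_mul_eq_one_right h.symm)
  -- the "dot" action of G on M
  set dot : G → M → M := fun g m => (MonoidAlgebra.single g (1 : ℤ) : MonoidAlgebra ℤ G) • m
    with hdot
  have dot_add : ∀ g (a b : M), dot g (a + b) = dot g a + dot g b := fun g a b => smul_add _ a b
  have dot_sub : ∀ g (a b : M), dot g (a - b) = dot g a - dot g b := fun g a b => smul_sub _ a b
  have dot_neg : ∀ g (a : M), dot g (-a) = -(dot g a) := fun g a => smul_neg _ a
  have dot_dot : ∀ g h (a : M), dot g (dot h a) = dot (g * h) a := by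
    intro g h a
    simp only [hdot, smul_smul, MonoidAlgebra.single_mul_single, one_mul]
  -- choose a set-theoretic section σ
  choose σ hσ using hπ
  -- factor set
  have hker : ∀ g h : G, σ g * σ h * (σ (g * h))⁻¹ ∈ MonoidHom.ker π := by
    intro g h
    simp [MonoidHom.mem_ker, hσ, mul_assoc]
  choose f hf using fun g h => hjsurj _ (hker g h)
  -- cocycle identity
  have hcoc : ∀ x g h : G, dot x (f g h) + f x (g * h) = f x g + f (x * g) h := by
    intro x g h
    apply hjinj
    rw [hjadd, hjadd, hdot, hact x (σ x) (hσ x) (f g h), hf, hf, hf, hf]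
    rw [mul_assoc x g h]
    group
  -- the projection pr
  set b := Module.Free.chooseBasis (MonoidAlgebra ℤ G) M with hb
  set φ : MonoidAlgebra ℤ G → MonoidAlgebra ℤ G :=
    fun q => MonoidAlgebra.single 1 (q.coeff 1) with hφ
  have hφ0 : φ 0 = 0 := by simp [hφ]
  have hmr : ∀ u v : Module.Free.ChooseBasisIndex (MonoidAlgebra ℤ G) M →₀ MonoidAlgebra ℤ G,
      Finsupp.mapRange φ hφ0 (u + v) = Finsupp.mapRange φ hφ0 u + Finsupp.mapRange φ hφ0 v := by
    intro u v
    refine Finsupp.ext fun i => ?_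
    simp only [Finsupp.mapRange_apply, hφ, Finsupp.add_apply]
    have h7 : (u i + v i).coeff 1 = (u i).coeff 1 + (v i).coeff 1 := by
      rw [MonoidAlgebra.coeff_add, Finsupp.add_apply]
    rw [h7, MonoidAlgebra.single_add]
  set pr : M → M := fun m => b.repr.symm (Finsupp.mapRange φ hφ0 (b.repr m)) with hpr
  have pr_add : ∀ a c : M, pr (a + c) = pr a + pr c := by
    intro a c
    show b.repr.symm (Finsupp.mapRange φ hφ0 (b.repr (a + c))) = _
    rw [map_add, hmr, map_add]
  have pr_sub : ∀ a c : M, pr (a - c) = pr a - pr c := by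
    intro a c
    have h1 : pr a = pr (a - c) + pr c := by rw [← pr_add, sub_add_cancel]
    rw [h1]; abel
  -- auxiliary: summing singles over the whole group recovers the element
  have huniv : ∀ q : MonoidAlgebra ℤ G, (∑ x : G, MonoidAlgebra.single x (q.coeff x)) = q := by
    intro q
    apply MonoidAlgebra.coeff_injective
    rw [MonoidAlgebra.coeff_sum]
    simp only [MonoidAlgebra.coeff_single]
    conv_rhs => rw [← Finsupp.sum_single q.coeff]
    rw [Finsupp.sum]
    exact (Finset.sum_subset (Finset.subset_univ _) (fun x _ hx => by
      rw [Finsupp.notMem_support_iff.mp hx]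
      exact Finsupp.single_zero x)).symm
  -- key property of pr : ∑ x, x⁻¹ • pr (x • m) = m
  have key : ∀ m : M, (∑ x : G, dot x⁻¹ (pr (dot x m))) = m := by
    intro m
    apply b.repr.injective
    rw [map_sum]
    have hterm : ∀ x : G, b.repr (dot x⁻¹ (pr (dot x m)))
        = (MonoidAlgebra.single x⁻¹ (1:ℤ) : MonoidAlgebra ℤ G) •
            (Finsupp.mapRange φ hφ0 ((MonoidAlgebra.single x (1:ℤ) : MonoidAlgebra ℤ G) • b.repr m)) := by
      intro x
      simp only [hdot, hpr, map_smul, LinearEquiv.apply_symm_apply]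
    rw [Finset.sum_congr rfl (fun x _ => hterm x)]
    refine Finsupp.ext fun i => ?_
    rw [Finsupp.finset_sum_apply]
    have hxi : ∀ x : G,
        ((MonoidAlgebra.single x⁻¹ (1:ℤ) : MonoidAlgebra ℤ G) •
            (Finsupp.mapRange φ hφ0 ((MonoidAlgebra.single x (1:ℤ) : MonoidAlgebra ℤ G) • b.repr m))) i
          = MonoidAlgebra.single x⁻¹ ((b.repr m i).coeff x⁻¹) := by
      intro x
      rw [Finsupp.smul_apply, Finsupp.mapRange_apply, Finsupp.smul_apply,
        smul_eq_mul, smul_eq_mul]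
      simp only [hφ]
      rw [MonoidAlgebra.single_mul_apply, MonoidAlgebra.single_mul_single]
      simp
    rw [Finset.sum_congr rfl (fun x _ => hxi x)]
    exact Eq.trans (Fintype.sum_equiv (Equiv.inv G) _
      (fun x => MonoidAlgebra.single x ((b.repr m i).coeff x)) (fun x => by simp)) (huniv _)
  -- the 1-cochain c
  set c : G → M := fun g => ∑ x : G, dot x⁻¹ (pr (f x g)) with hc
  -- f is the coboundary of c
  have hdc : ∀ g h : G, f g h = dot g (c h) - c (g * h) + c g := by
    intro g h
    have h1 : dot g (c h) = ∑ x : G, dot x⁻¹ (pr (f (x * g) h)) := by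
      show (MonoidAlgebra.single g (1:ℤ) : MonoidAlgebra ℤ G) •
          (∑ x : G, dot x⁻¹ (pr (f x h))) = _
      rw [Finset.smul_sum]
      refine Fintype.sum_equiv (Equiv.mulRight g⁻¹) _ _ (fun x => ?_)
      show dot g (dot x⁻¹ (pr (f x h))) = _
      rw [dot_dot]
      simp only [Equiv.coe_mulRight, mul_inv_rev, inv_inv, inv_mul_cancel_right]
    have h2 : ∀ x : G, dot x⁻¹ (pr (f (x * g) h)) - dot x⁻¹ (pr (f x (g * h)))
        + dot x⁻¹ (pr (f x g)) = dot x⁻¹ (pr (dot x (f g h))) := by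
      intro x
      have h3 : dot x (f g h) = f (x * g) h - f x (g * h) + f x g := by
        have h4 := hcoc x g h
        have h5 : dot x (f g h) = f x g + f (x * g) h - f x (g * h) := by
          rw [← h4]; abel
        rw [h5]; abel
      rw [h3, pr_add, pr_sub, dot_add, dot_sub]
    have h5 : c (g * h) = ∑ x : G, dot x⁻¹ (pr (f x (g * h))) := rfl
    have h6 : c g = ∑ x : G, dot x⁻¹ (pr (f x g)) := rfl
    rw [h1, h5, h6, ← Finset.sum_sub_distrib, ← Finset.sum_add_distrib]
    rw [Finset.sum_congr rfl (fun x _ => h2 x), key]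
  -- the splitting map
  set s : G → E := fun g => j (-(c g)) * σ g with hs
  have hmul : ∀ g h : G, s (g * h) = s g * s h := by
    intro g h
    have h0 : j (dot g (-(c h))) = σ g * j (-(c h)) * (σ g)⁻¹ := hact g (σ g) (hσ g) (-(c h))
    have hσgh : σ (g * h) = (j (f g h))⁻¹ * (σ g * σ h) := by rw [hf]; group
    have key2 : (-(c g)) + dot g (-(c h)) + f g h = -(c (g * h)) := by
      rw [dot_neg, hdc g h]; abel
    show j (-(c (g * h))) * σ (g * h) = (j (-(c g)) * σ g) * (j (-(c h)) * σ h)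
    rw [← key2, hjadd, hjadd, h0, hσgh]
    group
  refine ⟨MonoidHom.mk' s hmul, ?_, ?_⟩
  · ext g
    simp only [MonoidHom.comp_apply, MonoidHom.id_apply, MonoidHom.mk'_apply, hs]
    rw [map_mul, hσ, MonoidHom.mem_ker.mp (hjmem _), one_mul]
  · have hcomp : Function.Injective (π ∘ (fun g => s g)) := by
      have hid : (π ∘ fun g => s g) = id := by
        funext g
        simp only [Function.comp_apply, hs, map_mul, hσ,
          MonoidHom.mem_ker.mp (hjmem _), one_mul, id]
      rw [hid]
      exact Function.injective_id
    exact Function.Injective.of_comp hcomp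
end

section
/- Let p be an odd prime, let r ≥ 1, let d₁ be an odd positive integer dividing p − 1, and let θ : ℤ/d₁ℤ → AddAut(ℤ/p^rℤ) be an injective group homomorphism. Then there exists an injective group homomorphism from the semidirect product (ℤ/p^rℤ) ⋊_θ (ℤ/d₁ℤ) into B_{p^r}/Γ_2(P_{p^r}). -/
/-- Relations of the Artin braid group on `n` strands. The generator indexed by
`i : Fin (n-1)` corresponds to `σ_{i+1}` in the usual 1-based notation. -/
def braidRels (n : ℕ) : Set (FreeGroup (Fin (n - 1))) :=
  {r | ∃ i j : Fin (n - 1),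
      ((i : ℕ) + 2 ≤ (j : ℕ) ∧
        r = .of i * .of j * (.of i)⁻¹ * (.of j)⁻¹) ∨
      ((i : ℕ) + 1 = (j : ℕ) ∧
        r = .of i * .of j * .of i * (.of j * .of i * .of j)⁻¹)}

/-- The Artin braid group on `n` strands, as a presented group. -/
abbrev BraidGroup (n : ℕ) : Type := PresentedGroup (braidRels n)

/-- The image of the generator `σ_{i+1}` in the symmetric group: the
transposition `(i+1, i+2)` (0-based: swap of `i` and `i+1`). -/
def braidGenPerm (n : ℕ) (i : Fin (n - 1)) : Equiv.Perm (Fin n) :=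
  Equiv.swap ⟨(i : ℕ), by have := i.isLt; omega⟩ ⟨(i : ℕ) + 1, by have := i.isLt; omega⟩

lemma swap_comm_of_ne {α : Type*} [DecidableEq α] {a b c d : α}
    (hac : a ≠ c) (had : a ≠ d) (hbc : b ≠ c) (hbd : b ≠ d) :
    Equiv.swap a b * Equiv.swap c d = Equiv.swap c d * Equiv.swap a b := by
  have h := Equiv.swap_apply_apply (Equiv.swap c d) a b
  rw [Equiv.swap_inv, Equiv.swap_apply_of_ne_of_ne hac had,
    Equiv.swap_apply_of_ne_of_ne hbc hbd] at h
  calc Equiv.swap a b * Equiv.swap c d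
      = Equiv.swap c d * Equiv.swap a b * Equiv.swap c d * Equiv.swap c d := by rw [← h]
    _ = Equiv.swap c d * Equiv.swap a b := by
        rw [mul_assoc, Equiv.swap_mul_self, mul_one]

lemma swap_braid {α : Type*} [DecidableEq α] {a b c : α}
    (hab : a ≠ b) (hac : a ≠ c) (hbc : b ≠ c) :
    Equiv.swap a b * Equiv.swap b c * Equiv.swap a b =
      Equiv.swap b c * Equiv.swap a b * Equiv.swap b c := by
  have h1 := Equiv.swap_apply_apply (Equiv.swap a b) b c
  have h2 := Equiv.swap_apply_apply (Equiv.swap b c) a b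
  rw [Equiv.swap_inv, Equiv.swap_apply_right,
    Equiv.swap_apply_of_ne_of_ne hac.symm hbc.symm] at h1
  rw [Equiv.swap_inv, Equiv.swap_apply_of_ne_of_ne hab hac, Equiv.swap_apply_left] at h2
  rw [← h1, ← h2]

lemma braidRels_lift (n : ℕ) :
    ∀ r ∈ braidRels n, FreeGroup.lift (braidGenPerm n) r = 1 := by
  rintro r ⟨i, j, ⟨hij, rfl⟩ | ⟨hij, rfl⟩⟩
  · simp only [map_mul, map_inv, FreeGroup.lift_apply_of]
    have hi := i.isLt; have hj := j.isLt
    have h : braidGenPerm n i * braidGenPerm n j = braidGenPerm n j * braidGenPerm n i := by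
      apply swap_comm_of_ne <;> (simp only [ne_eq, Fin.mk.injEq]; omega)
    rw [h]; group
  · simp only [map_mul, map_inv, FreeGroup.lift_apply_of]
    have hi := i.isLt; have hj := j.isLt
    have h1 : braidGenPerm n i =
        Equiv.swap (⟨(i : ℕ), by omega⟩ : Fin n) ⟨(i : ℕ) + 1, by omega⟩ := rfl
    have h2 : braidGenPerm n j =
        Equiv.swap (⟨(i : ℕ) + 1, by omega⟩ : Fin n) ⟨(i : ℕ) + 2, by omega⟩ := by
      unfold braidGenPerm
      congr 1 <;> (apply Fin.ext; simp only; omega)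
    rw [h1, h2, swap_braid (by simp only [ne_eq, Fin.mk.injEq]; omega)
      (by simp only [ne_eq, Fin.mk.injEq]; omega) (by simp only [ne_eq, Fin.mk.injEq]; omega)]
    group

/-- The canonical projection from the braid group to the symmetric group,
sending `σ_i` to the transposition `(i, i+1)`. -/
def braidProj (n : ℕ) : BraidGroup n →* Equiv.Perm (Fin n) :=
  PresentedGroup.toGroup (braidRels_lift n)

/-- `Γ_k(P_n)` regarded as a normal subgroup of `B_n`: the normal closure in `B_n` of the
image of the `k`-th term of the lower central series of the pure braid group
`P_n = ker (braidProj n)`.  (Here `Γ_k(P_n) = lowerCentralSeries P_n (k-1)`, since Mathlib's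
lower central series is indexed from `0`.) -/
def gammaB (n k : ℕ) : Subgroup (BraidGroup n) :=
  Subgroup.normalClosure
    ((Subgroup.map (MonoidHom.ker (braidProj n)).subtype
      ((⊤ : Subgroup ↥(MonoidHom.ker (braidProj n))).lowerCentralSeries (k - 1)) :
        Subgroup (BraidGroup n)) : Set (BraidGroup n))

instance (n k : ℕ) : (gammaB n k).Normal := Subgroup.normalClosure_normal

lemma gammaB_le_ker (n k : ℕ) : gammaB n k ≤ MonoidHom.ker (braidProj n) := by
  apply Subgroup.normalClosure_le_normal
  rintro x ⟨y, _, rfl⟩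
  exact y.2

/-- The homomorphism `σ̄ : B_n/Γ_k(P_n) → S_n` induced by `braidProj`. -/
def braidProjBar (n k : ℕ) : BraidGroup n ⧸ gammaB n k →* Equiv.Perm (Fin n) :=
  QuotientGroup.lift (gammaB n k) (braidProj n) (fun _ hx => gammaB_le_ker n k hx)

/-- The (old Mathlib) multiplicative group structure on `AddAut A`: composition. -/
instance addAutGroupOld (A : Type*) [Add A] : Group (AddAut A) where
  mul g h := AddEquiv.trans h g
  one := AddEquiv.refl _
  inv := AddEquiv.symm
  mul_assoc _ _ _ := rfl
  one_mul _ := rfl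
  mul_one _ := rfl
  inv_mul_cancel := AddEquiv.self_trans_symm

/-- Convert additive automorphisms of `A` into multiplicative automorphisms of
`Multiplicative A`. -/
def addAutToMulAut (A : Type*) [AddGroup A] : AddAut A →* MulAut (Multiplicative A) where
  toFun f := AddEquiv.toMultiplicative f
  map_one' := rfl
  map_mul' _ _ := rfl

/-- The action on `Multiplicative A` associated to a homomorphism `θ : H →* AddAut A`,
used to form the semidirect product `A ⋊_θ H` in multiplicative notation. -/
def sdAction {A H : Type*} [AddGroup A] [Group H] (θ : H →* AddAut A) :
    H →* MulAut (Multiplicative A) :=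
  (addAutToMulAut A).comp θ

namespace BraidEmb

open Subgroup

variable {n : ℕ}

lemma braid_mk_rel {r : FreeGroup (Fin (n-1))} (h : r ∈ braidRels n) :
    PresentedGroup.mk (braidRels n) r = 1 :=
  (QuotientGroup.eq_one_iff _).2 (Subgroup.subset_normalClosure h)

lemma braid_comm (i j : Fin (n-1)) (h : (i:ℕ)+2 ≤ (j:ℕ)) :
    (PresentedGroup.of i : BraidGroup n) * .of j = .of j * .of i := by
  have h1 := braid_mk_rel (n := n) ⟨i, j, Or.inl ⟨h, rfl⟩⟩
  simp only [map_mul, map_inv] at h1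
  have : (PresentedGroup.of i : BraidGroup n) * .of j * (.of i)⁻¹ * (.of j)⁻¹ = 1 := h1

  calc (PresentedGroup.of i : BraidGroup n) * .of j
      = ((PresentedGroup.of i : BraidGroup n) * .of j * (.of i)⁻¹ * (.of j)⁻¹) * (.of j * .of i) := by group
    _ = .of j * .of i := by rw [this]; group

lemma braid_braid (i j : Fin (n-1)) (h : (i:ℕ)+1 = (j:ℕ)) :
    (PresentedGroup.of i : BraidGroup n) * .of j * .of i = .of j * .of i * .of j := by
  have h1 := braid_mk_rel (n := n) ⟨i, j, Or.inr ⟨h, rfl⟩⟩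
  simp only [map_mul, map_inv] at h1
  have : (PresentedGroup.of i : BraidGroup n) * .of j * .of i *
      ((PresentedGroup.of j : BraidGroup n) * .of i * .of j)⁻¹ = 1 := by
    simp only [mul_inv_rev, mul_assoc] at h1 ⊢; exact h1
  calc (PresentedGroup.of i : BraidGroup n) * .of j * .of i
      = ((PresentedGroup.of i : BraidGroup n) * .of j * .of i *
          ((PresentedGroup.of j : BraidGroup n) * .of i * .of j)⁻¹) * (.of j * .of i * .of j) := by group
    _ = _ := by rw [this]; group

end BraidEmb
namespace BraidEmb

def sqSet (n : ℕ) : Set (FreeGroup (Fin (n-1))) :=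
  Set.range fun i : Fin (n-1) => (FreeGroup.of i) ^ 2

def SQ (n : ℕ) : Subgroup (BraidGroup n) :=
  Subgroup.normalClosure ((PresentedGroup.mk (braidRels n)) '' (sqSet n))

instance (n : ℕ) : (SQ n).Normal := Subgroup.normalClosure_normal

def Csq (n : ℕ) := BraidGroup n ⧸ SQ n

instance (n : ℕ) : Group (Csq n) := inferInstanceAs (Group (BraidGroup n ⧸ SQ n))

def cmk (n : ℕ) : BraidGroup n →* Csq n := QuotientGroup.mk' (SQ n)

lemma cmk_surjective (n : ℕ) : Function.Surjective (cmk n) :=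
  QuotientGroup.mk'_surjective _

noncomputable def xg (n : ℕ) (k : ℕ) : Csq n :=
  if h : k < n-1 then cmk n (PresentedGroup.of ⟨k, h⟩) else 1

lemma xg_of (n : ℕ) (i : Fin (n-1)) : xg n i = cmk n (PresentedGroup.of i) := by
  rw [xg, dif_pos i.isLt]

lemma xg_sq (n k : ℕ) : xg n k * xg n k = 1 := by
  rw [xg]
  split
  · rw [← map_mul]
    refine (QuotientGroup.eq_one_iff _).2 (Subgroup.subset_normalClosure ?_)
    exact ⟨(FreeGroup.of ⟨k, by assumption⟩)^2, ⟨_, rfl⟩, by simp [sq, PresentedGroup.of]⟩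
  · simp

lemma xg_inv (n k : ℕ) : (xg n k)⁻¹ = xg n k := by
  rw [inv_eq_iff_mul_eq_one, xg_sq]

lemma xg_comm (n : ℕ) {k l : ℕ} (h : k + 2 ≤ l) : xg n k * xg n l = xg n l * xg n k := by
  by_cases hl : l < n - 1
  · have hk : k < n - 1 := by omega
    simp only [xg]
    rw [dif_pos hl, dif_pos hk, ← map_mul, ← map_mul, braid_comm ⟨k, hk⟩ ⟨l, hl⟩ h]
  · simp only [xg]
    rw [dif_neg hl]; simp

lemma xg_braid (n : ℕ) {k : ℕ} (h : k + 1 < n - 1) :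
    xg n k * xg n (k+1) * xg n k = xg n (k+1) * xg n k * xg n (k+1) := by
  have hk : k < n - 1 := by omega
  rw [xg, dif_pos hk, xg, dif_pos h, ← map_mul, ← map_mul, ← map_mul, ← map_mul,
    braid_braid ⟨k, hk⟩ ⟨k+1, h⟩ rfl]

noncomputable def rd (n m : ℕ) : ℕ → Csq n
  | 0 => 1
  | (k+1) => rd n m k * xg n (m - k)

lemma rd_comm (n m : ℕ) : ∀ k t, t + k < m → rd n m k * xg n t = xg n t * rd n m k := by
  intro k
  induction k with
  | zero => intro t _; simp [rd]
  | succ k ih =>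
    intro t ht
    have h1 : t + 2 ≤ m - k := by omega
    rw [rd, mul_assoc, ← xg_comm n h1, ← mul_assoc, ih t (by omega), mul_assoc]

lemma rd_pull (n m : ℕ) (hm : m < n - 1) :
    ∀ k t, k ≤ m + 1 → m + 2 ≤ t + k → t ≤ m →
      rd n m k * xg n t = xg n (t-1) * rd n m k := by
  intro k
  induction k with
  | zero => intro t _ h2 h3; omega
  | succ k ih =>
    intro t h1 h2 h3
    rcases Nat.lt_or_ge (t + k) (m + 2) with hc | hc
    · -- t + k = m + 1 : braid case
      have hk1 : 1 ≤ k := by omega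
      obtain ⟨k', rfl⟩ : ∃ k', k = k' + 1 := ⟨k - 1, by omega⟩
      have htk' : t + k' = m := by omega
      have ht1 : 1 ≤ t := by omega
      have e1 : m - k' = t := by omega
      have e2 : m - (k' + 1) = t - 1 := by omega
      show rd n m (k'+1) * xg n (m - (k'+1)) * xg n t = _
      rw [e2, rd, e1]
      have hbr : xg n (t-1) * xg n t * xg n (t-1) = xg n t * xg n (t-1) * xg n t := by
        have := xg_braid n (k := t - 1) (by omega)
        rw [show t - 1 + 1 = t by omega] at this
        exact this
      calc rd n m k' * xg n t * xg n (t-1) * xg n t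
          = rd n m k' * (xg n t * xg n (t-1) * xg n t) := by group
        _ = rd n m k' * (xg n (t-1) * xg n t * xg n (t-1)) := by rw [← hbr]
        _ = (rd n m k' * xg n (t-1)) * (xg n t * xg n (t-1)) := by group
        _ = (xg n (t-1) * rd n m k') * (xg n t * xg n (t-1)) := by
              rw [rd_comm n m k' (t-1) (by omega)]
        _ = xg n (t-1) * (rd n m (k'+1) * xg n (m - (k'+1))) := by
              rw [rd, e1, e2]; group
      -- conclude
    · -- m + 2 ≤ t + k : commute and recurse
      have hcomm : (m - k) + 2 ≤ t := by omega
      show rd n m k * xg n (m - k) * xg n t = _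
      rw [mul_assoc, xg_comm n hcomm, ← mul_assoc, ih t (by omega) (by omega) h3,
        mul_assoc]
      rfl

end BraidEmb
namespace BraidEmb

open Classical in
noncomputable def Uf (n : ℕ) : ℕ → Finset (Csq n)
  | 0 => {1}
  | (m+1) => (Finset.range (m+2)).biUnion (fun k => (Uf n m).image (· * rd n m k))

open Classical in
lemma Uf_succ_mem {n m : ℕ} {c : Csq n} :
    c ∈ Uf n (m+1) ↔ ∃ k < m + 2, ∃ v ∈ Uf n m, v * rd n m k = c := by
  classical
  simp only [Uf, Finset.mem_biUnion, Finset.mem_range, Finset.mem_image]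

lemma Uf_mono_succ {n m : ℕ} {c : Csq n} (h : c ∈ Uf n m) : c ∈ Uf n (m+1) := by
  rw [Uf_succ_mem]
  exact ⟨0, by omega, c, h, by simp [rd]⟩

lemma one_mem_Uf (n : ℕ) : ∀ m, (1 : Csq n) ∈ Uf n m := by
  intro m
  induction m with
  | zero => simp [Uf]
  | succ m ih => exact Uf_mono_succ ih

lemma Uf_mul_x (n : ℕ) : ∀ m, m ≤ n - 1 → ∀ u ∈ Uf n m, ∀ t, t < m → u * xg n t ∈ Uf n m := by
  intro m
  induction m with
  | zero => intro _ _ _ t ht; omega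
  | succ m ih =>
    intro hm u hu t ht
    obtain ⟨k, hk, v, hv, rfl⟩ := Uf_succ_mem.1 hu
    have hmn : m < n - 1 := by omega
    have ht' : t ≤ m := by omega
    rcases Nat.eq_zero_or_pos k with rfl | hkpos
    · simp only [rd, mul_one]
      rcases Nat.lt_or_ge t m with h | h
      · exact Uf_mono_succ (ih (by omega) v hv t h)
      · have htm : t = m := by omega
        subst htm
        rw [Uf_succ_mem]
        exact ⟨1, by omega, v, hv, by simp [rd]⟩
    · rcases Nat.lt_or_ge (t + k) m with hc | hc
      · -- commute
        rw [mul_assoc, rd_comm n m k t hc, ← mul_assoc]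
        rw [Uf_succ_mem]
        exact ⟨k, hk, v * xg n t, ih (by omega) v hv t (by omega), rfl⟩
      · rcases Nat.eq_or_lt_of_le hc with hc2 | hc2
        · -- t + k = m : extend run
          have hkm : k ≤ m := by omega
          have : rd n m k * xg n t = rd n m (k+1) := by
            rw [rd, show m - k = t by omega]
          rw [mul_assoc, this, Uf_succ_mem]
          exact ⟨k+1, by omega, v, hv, rfl⟩
        · rcases Nat.eq_or_lt_of_le hc2 with hc3 | hc3
          · -- t + k = m + 1 : cancel
            obtain ⟨k', rfl⟩ : ∃ k', k = k' + 1 := ⟨k - 1, by omega⟩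
            have : rd n m (k'+1) * xg n t = rd n m k' := by
              rw [rd, show m - k' = t by omega, mul_assoc, xg_sq, mul_one]
            rw [mul_assoc, this, Uf_succ_mem]
            exact ⟨k', by omega, v, hv, rfl⟩
          · -- t + k ≥ m + 2 : pull through
            have ht1 : 1 ≤ t := by omega
            rw [mul_assoc, rd_pull n m hmn k t (by omega) (by omega) ht', ← mul_assoc]
            rw [Uf_succ_mem]
            exact ⟨k, hk, v * xg n (t-1), ih (by omega) v hv (t-1) (by omega), rfl⟩

lemma Uf_card (n : ℕ) : ∀ m, (Uf n m).card ≤ (m+1).factorial := by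
  intro m
  induction m with
  | zero => simp [Uf]
  | succ m ih =>
    classical
    calc (Uf n (m+1)).card
        ≤ ∑ k ∈ Finset.range (m+2), ((Uf n m).image (· * rd n m k)).card :=
          Finset.card_biUnion_le
      _ ≤ ∑ _k ∈ Finset.range (m+2), (m+1).factorial := by
          refine Finset.sum_le_sum fun k _ => ?_
          exact le_trans (Finset.card_image_le) ih
      _ = (m+2) * (m+1).factorial := by
          rw [Finset.sum_const, Finset.card_range, smul_eq_mul]
      _ = (m+2).factorial := rfl

lemma mem_Uf_top (n : ℕ) (c : Csq n) : c ∈ Uf n (n-1) := by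
  have hgen : c ∈ Subgroup.closure (Set.range fun i : Fin (n-1) => xg n i) := by
    induction c using QuotientGroup.induction_on with
    | H b =>
      refine PresentedGroup.generated_by (braidRels n)
        ((Subgroup.closure (Set.range fun i : Fin (n-1) => xg n i)).comap (cmk n)) ?_ b
      intro j
      simp only [Subgroup.mem_comap]
      rw [← xg_of]
      exact Subgroup.subset_closure ⟨j, rfl⟩
  induction hgen using Subgroup.closure_induction_right with
  | one => exact one_mem_Uf n _
  | mul_right y hy c' hc' ih =>
    obtain ⟨i, rfl⟩ := hc'
    exact Uf_mul_x n (n-1) le_rfl y ih i i.isLt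
  | mul_inv_cancel y hy c' hc' ih =>
    obtain ⟨i, rfl⟩ := hc'
    rw [xg_inv]
    exact Uf_mul_x n (n-1) le_rfl y ih i i.isLt

lemma csq_emb_inj (n : ℕ) :
    Function.Injective (fun c : Csq n => (⟨c, mem_Uf_top n c⟩ : {x // x ∈ Uf n (n-1)})) :=
  fun _ _ h => congrArg Subtype.val h

lemma finite_Csq (n : ℕ) : Finite (Csq n) :=
  Finite.of_injective _ (csq_emb_inj n)

lemma card_Csq_le (n : ℕ) : Nat.card (Csq n) ≤ n.factorial := by
  have h1 : Nat.card (Csq n) ≤ Nat.card {x // x ∈ Uf n (n-1)} :=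
    Nat.card_le_card_of_injective _ (csq_emb_inj n)
  have h2 : Nat.card {x // x ∈ Uf n (n-1)} = (Uf n (n-1)).card := by
    simp [Nat.card_eq_fintype_card]
  have h3 := Uf_card n (n-1)
  have h4 : (n - 1 + 1).factorial ≤ n.factorial := by
    cases n with
    | zero => simp
    | succ m => simp
  omega

lemma sq_mem_ker (n : ℕ) : (PresentedGroup.mk (braidRels n)) '' (sqSet n) ⊆
    (MonoidHom.ker (braidProj n) : Set (BraidGroup n)) := by
  rintro _ ⟨_, ⟨i, rfl⟩, rfl⟩
  simp only [SetLike.mem_coe, MonoidHom.mem_ker, map_pow]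
  have : braidProj n (PresentedGroup.mk (braidRels n) (FreeGroup.of i)) = braidGenPerm n i :=
    PresentedGroup.toGroup.of _
  rw [this, sq]
  exact Equiv.swap_mul_self _ _

lemma SQ_le_ker (n : ℕ) : SQ n ≤ MonoidHom.ker (braidProj n) :=
  Subgroup.normalClosure_le_normal (sq_mem_ker n)

noncomputable def pihat (n : ℕ) : Csq n →* Equiv.Perm (Fin n) :=
  QuotientGroup.lift (SQ n) (braidProj n) (fun _ hx => SQ_le_ker n hx)

lemma pihat_cmk (n : ℕ) (w : BraidGroup n) : pihat n (cmk n w) = braidProj n w := rfl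

-- adjacent transpositions generate the symmetric group
lemma adj_swap_mem (n : ℕ) (x y : Fin n) (h : x.val + 1 = y.val) :
    Equiv.swap x y ∈ Subgroup.closure (Set.range (braidGenPerm n)) := by
  have hx : x.val < n - 1 := by have := y.isLt; omega
  refine Subgroup.subset_closure ⟨⟨x.val, hx⟩, ?_⟩
  unfold braidGenPerm
  congr 1 <;> apply Fin.ext <;> simp [h]

lemma swap_mem_closure_adj (n : ℕ) : ∀ (d : ℕ) (x y : Fin n), x.val + d + 1 = y.val →
    Equiv.swap x y ∈ Subgroup.closure (Set.range (braidGenPerm n)) := by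
  intro d
  induction d with
  | zero => exact fun x y h => adj_swap_mem n x y h
  | succ d ih =>
    intro x y h
    have hy : 1 ≤ y.val := by omega
    set z : Fin n := ⟨y.val - 1, by have := y.isLt; omega⟩ with hz
    have hxz : x.val + d + 1 = z.val := by simp [hz]; omega
    have he : Equiv.swap z y ∈ Subgroup.closure (Set.range (braidGenPerm n)) :=
      adj_swap_mem n z y (by simp [hz]; omega)
    have hmem := ih x z hxz
    have h1 : Equiv.swap z y x = x :=
      Equiv.swap_apply_of_ne_of_ne (by simp [Fin.ext_iff, hz]; omega)
        (by simp [Fin.ext_iff]; omega)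
    have h2 : Equiv.swap z y z = y := Equiv.swap_apply_left _ _
    have key := Equiv.swap_apply_apply (Equiv.swap z y) x z
    rw [h1, h2] at key
    rw [key]
    exact Subgroup.mul_mem _ (Subgroup.mul_mem _ he hmem) (Subgroup.inv_mem _ he)

lemma closure_adj_eq_top (n : ℕ) :
    Subgroup.closure (Set.range (braidGenPerm n)) = ⊤ := by
  rw [eq_top_iff, ← Equiv.Perm.closure_isSwap, Subgroup.closure_le]
  rintro σ ⟨x, y, hxy, rfl⟩
  rcases Nat.lt_or_ge x.val y.val with h | h
  · exact swap_mem_closure_adj n (y.val - x.val - 1) x y (by omega)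
  · have hyx : y.val < x.val := by
      rcases Nat.eq_or_lt_of_le h with h' | h'
      · exact absurd (Fin.ext h'.symm) hxy
      · omega
    rw [Equiv.swap_comm]
    exact swap_mem_closure_adj n (x.val - y.val - 1) y x (by omega)

lemma braidProj_surjective (n : ℕ) : Function.Surjective (braidProj n) := by
  intro σ
  have hσ : σ ∈ Subgroup.closure (Set.range (braidGenPerm n)) := by
    rw [closure_adj_eq_top]; trivial
  have : Subgroup.closure (Set.range (braidGenPerm n)) ≤ (braidProj n).range := by
    rw [Subgroup.closure_le]
    rintro _ ⟨i, rfl⟩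
    exact ⟨PresentedGroup.of i, PresentedGroup.toGroup.of _⟩
  exact this hσ

lemma pihat_surjective (n : ℕ) : Function.Surjective (pihat n) := by
  intro σ
  obtain ⟨w, hw⟩ := braidProj_surjective n σ
  exact ⟨cmk n w, hw⟩

lemma pihat_injective (n : ℕ) : Function.Injective (pihat n) := by
  have hfin := finite_Csq n
  have hcards : Nat.card (Equiv.Perm (Fin n)) = n.factorial := by
    rw [Nat.card_eq_fintype_card, Fintype.card_perm, Fintype.card_fin]
  have hle := card_Csq_le n
  have hge : Nat.card (Equiv.Perm (Fin n)) ≤ Nat.card (Csq n) :=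
    Nat.card_le_card_of_surjective _ (pihat_surjective n)
  have hcard : Nat.card (Csq n) = n.factorial := by omega
  have hquot : Nat.card (Csq n ⧸ MonoidHom.ker (pihat n)) = n.factorial := by
    rw [Nat.card_congr (QuotientGroup.quotientKerEquivOfSurjective _
      (pihat_surjective n)).toEquiv, hcards]
  have hlag := Subgroup.card_eq_card_quotient_mul_card_subgroup (MonoidHom.ker (pihat n))
  rw [hcard, hquot] at hlag
  have hpos := Nat.factorial_pos n
  have hker : Nat.card (MonoidHom.ker (pihat n)) = 1 :=
    Nat.eq_of_mul_eq_mul_left hpos (by rw [mul_one, ← hlag])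
  have : MonoidHom.ker (pihat n) = ⊥ :=
    (Subgroup.eq_bot_iff_card (H := MonoidHom.ker (pihat n))).2 hker
  exact (MonoidHom.ker_eq_bot_iff _).1 this

lemma ker_braidProj_le_SQ (n : ℕ) : MonoidHom.ker (braidProj n) ≤ SQ n := by
  intro w hw
  have : pihat n (cmk n w) = 1 := hw
  have h1 : cmk n w = 1 := pihat_injective n (by rw [this, map_one])
  rwa [← QuotientGroup.ker_mk' (SQ n), MonoidHom.mem_ker]

end BraidEmb
namespace BraidEmb

lemma braidProjBar_mk (n : ℕ) (w : BraidGroup n) :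
    braidProjBar n 2 (QuotientGroup.mk w) = braidProj n w := rfl

open scoped commutatorElement in
lemma pure_comm {n : ℕ} {x y : BraidGroup n ⧸ gammaB n 2}
    (hx : braidProjBar n 2 x = 1) (hy : braidProjBar n 2 y = 1) : x * y = y * x := by
  obtain ⟨a, rfl⟩ := QuotientGroup.mk_surjective x
  obtain ⟨b, rfl⟩ := QuotientGroup.mk_surjective y
  have ha : a ∈ MonoidHom.ker (braidProj n) := hx
  have hb : b ∈ MonoidHom.ker (braidProj n) := hy
  have hcomm : ⁅a, b⁆ ∈ gammaB n 2 := by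
    apply Subgroup.subset_normalClosure
    rw [SetLike.mem_coe, Subgroup.mem_map]
    refine ⟨⁅(⟨a, ha⟩ : MonoidHom.ker (braidProj n)), (⟨b, hb⟩ : MonoidHom.ker (braidProj n))⁆,
      ?_, rfl⟩
    show _ ∈ (⊤ : Subgroup _).lowerCentralSeries (2-1)
    rw [show (2-1 : ℕ) = 1 from rfl, Subgroup.top_lowerCentralSeries_one, commutator_def]
    exact Subgroup.commutator_mem_commutator (Subgroup.mem_top _) (Subgroup.mem_top _)
  have h1 : (QuotientGroup.mk ⁅a, b⁆ : BraidGroup n ⧸ gammaB n 2) = 1 :=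
    (QuotientGroup.eq_one_iff _).2 hcomm
  have h2 : (QuotientGroup.mk a : BraidGroup n ⧸ gammaB n 2) * QuotientGroup.mk b *
      (QuotientGroup.mk a : BraidGroup n ⧸ gammaB n 2)⁻¹ *
      (QuotientGroup.mk b : BraidGroup n ⧸ gammaB n 2)⁻¹ = 1 := h1
  calc (QuotientGroup.mk a : BraidGroup n ⧸ gammaB n 2) * QuotientGroup.mk b
      = ((QuotientGroup.mk a : BraidGroup n ⧸ gammaB n 2) * QuotientGroup.mk b *
          (QuotientGroup.mk a : BraidGroup n ⧸ gammaB n 2)⁻¹ *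
          (QuotientGroup.mk b : BraidGroup n ⧸ gammaB n 2)⁻¹) *
        (QuotientGroup.mk b * QuotientGroup.mk a) := by group
    _ = _ := by rw [h2]; group

lemma conj_pure_eq {n : ℕ} {u v x : BraidGroup n ⧸ gammaB n 2}
    (huv : braidProjBar n 2 u = braidProjBar n 2 v) (hx : braidProjBar n 2 x = 1) :
    u * x * u⁻¹ = v * x * v⁻¹ := by
  have hpure : braidProjBar n 2 (v⁻¹ * u) = 1 := by
    rw [map_mul, map_inv, huv, inv_mul_cancel]
  have h := pure_comm hpure hx
  calc u * x * u⁻¹ = v * ((v⁻¹ * u) * x) * u⁻¹ := by group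
    _ = v * (x * (v⁻¹ * u)) * u⁻¹ := by rw [h]
    _ = v * x * v⁻¹ := by group

lemma mirror_rels (n : ℕ) : ∀ r ∈ braidRels n,
    FreeGroup.lift (fun i => (PresentedGroup.of i : BraidGroup n)⁻¹) r = 1 := by
  rintro r ⟨i, j, ⟨hij, rfl⟩ | ⟨hij, rfl⟩⟩ <;>
    simp only [map_mul, map_inv, FreeGroup.lift_apply_of]
  · have h := braid_comm i j hij
    have h' : (PresentedGroup.of i : BraidGroup n)⁻¹ * (PresentedGroup.of j)⁻¹ =
        (PresentedGroup.of j : BraidGroup n)⁻¹ * (PresentedGroup.of i)⁻¹ := by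
      rw [← mul_inv_rev, ← mul_inv_rev, h]
    rw [inv_inv, inv_inv]
    calc (PresentedGroup.of i : BraidGroup n)⁻¹ * (PresentedGroup.of j)⁻¹ *
          PresentedGroup.of i * PresentedGroup.of j
        = (PresentedGroup.of j : BraidGroup n)⁻¹ * (PresentedGroup.of i)⁻¹ *
          PresentedGroup.of i * PresentedGroup.of j := by rw [h']
      _ = 1 := by group
  · have h := braid_braid i j hij
    have h' : ((PresentedGroup.of i : BraidGroup n) * .of j * .of i)⁻¹ =
        ((PresentedGroup.of j : BraidGroup n) * .of i * .of j)⁻¹ := by rw [h]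
    simp only [mul_inv_rev] at h'
    calc (PresentedGroup.of i : BraidGroup n)⁻¹ * (PresentedGroup.of j)⁻¹ *
          (PresentedGroup.of i)⁻¹ *
          ((PresentedGroup.of j : BraidGroup n)⁻¹ * (PresentedGroup.of i)⁻¹ *
            (PresentedGroup.of j)⁻¹)⁻¹
        = ((PresentedGroup.of i : BraidGroup n)⁻¹ * (.of j)⁻¹ * (.of i)⁻¹) *
          ((PresentedGroup.of j : BraidGroup n)⁻¹ * (.of i)⁻¹ * (.of j)⁻¹)⁻¹ := by group
      _ = 1 := by
          rw [show (PresentedGroup.of i : BraidGroup n)⁻¹ * (.of j)⁻¹ * (.of i)⁻¹ =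
              ((PresentedGroup.of i : BraidGroup n) * .of j * .of i)⁻¹ by group,
            show (PresentedGroup.of j : BraidGroup n)⁻¹ * (.of i)⁻¹ * (.of j)⁻¹ =
              ((PresentedGroup.of j : BraidGroup n) * .of i * .of j)⁻¹ by group, h]
          group

noncomputable def mirror (n : ℕ) : BraidGroup n →* BraidGroup n :=
  PresentedGroup.toGroup (mirror_rels n)

lemma mirror_of (n : ℕ) (i : Fin (n-1)) :
    mirror n (PresentedGroup.of i) = (PresentedGroup.of i)⁻¹ :=
  PresentedGroup.toGroup.of _

lemma braidProj_mirror (n : ℕ) (w : BraidGroup n) :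
    braidProj n (mirror n w) = braidProj n w := by
  have : (braidProj n).comp (mirror n) = braidProj n := by
    apply PresentedGroup.ext
    intro x
    rw [MonoidHom.comp_apply, mirror_of, map_inv]
    show (braidProj n (PresentedGroup.of x))⁻¹ = _
    have hof : braidProj n (PresentedGroup.of x) = braidGenPerm n x :=
      PresentedGroup.toGroup.of _
    rw [hof, braidGenPerm, Equiv.swap_inv]
  exact DFunLike.congr_fun this w

lemma map_lcs_le {G G' : Type*} [Group G] [Group G'] (fhom : G →* G') (k : ℕ) :
    Subgroup.map fhom ((⊤ : Subgroup G).lowerCentralSeries k) ≤ (⊤ : Subgroup G').lowerCentralSeries k := by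
  induction k with
  | zero => exact le_top
  | succ k ih =>
    have e1 : (⊤ : Subgroup G).lowerCentralSeries (k+1) = ⁅(⊤ : Subgroup G).lowerCentralSeries k, ⊤⁆ := rfl
    have e2 : (⊤ : Subgroup G').lowerCentralSeries (k+1) = ⁅(⊤ : Subgroup G').lowerCentralSeries k, ⊤⁆ := rfl
    rw [e1, e2, Subgroup.map_commutator]
    exact Subgroup.commutator_mono ih le_top

noncomputable def mirrorKer (n : ℕ) :
    MonoidHom.ker (braidProj n) →* MonoidHom.ker (braidProj n) :=
  ((mirror n).domRestrict (MonoidHom.ker (braidProj n))).codRestrict _ (fun x => by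
    have hx : braidProj n (x : BraidGroup n) = 1 := x.2
    simp only [MonoidHom.restrict_apply, MonoidHom.mem_ker, braidProj_mirror, hx])

lemma mirror_gammaB (n : ℕ) {w : BraidGroup n} (hw : w ∈ gammaB n 2) :
    mirror n w ∈ gammaB n 2 := by
  revert w
  have hnormal : ((gammaB n 2).comap (mirror n)).Normal :=
    Subgroup.Normal.comap inferInstance _
  have : gammaB n 2 ≤ (gammaB n 2).comap (mirror n) := by
    apply Subgroup.normalClosure_le_normal
    rintro x ⟨y, hy, rfl⟩
    simp only [SetLike.mem_coe, Subgroup.mem_comap]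
    apply Subgroup.subset_normalClosure
    rw [SetLike.mem_coe, Subgroup.mem_map]
    exact ⟨mirrorKer n y, map_lcs_le (mirrorKer n) (2-1) ⟨y, hy, rfl⟩, rfl⟩
  exact fun w hw => this hw

noncomputable def mirrorBar (n : ℕ) :
    BraidGroup n ⧸ gammaB n 2 →* BraidGroup n ⧸ gammaB n 2 :=
  QuotientGroup.map _ _ (mirror n) (fun _ hx => mirror_gammaB n hx)

lemma mirrorBar_mk (n : ℕ) (w : BraidGroup n) :
    mirrorBar n (QuotientGroup.mk w) = QuotientGroup.mk (mirror n w) := rfl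

lemma braidProjBar_mirrorBar (n : ℕ) (q : BraidGroup n ⧸ gammaB n 2) :
    braidProjBar n 2 (mirrorBar n q) = braidProjBar n 2 q := by
  obtain ⟨w, rfl⟩ := QuotientGroup.mk_surjective q
  rw [mirrorBar_mk, braidProjBar_mk, braidProjBar_mk, braidProj_mirror]

lemma mirrorBar_pure {n : ℕ} {q : BraidGroup n ⧸ gammaB n 2}
    (hq : braidProjBar n 2 q = 1) : mirrorBar n q = q⁻¹ := by
  obtain ⟨w, rfl⟩ := QuotientGroup.mk_surjective q
  have hw : w ∈ MonoidHom.ker (braidProj n) := hq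
  have hw2 : w ∈ SQ n := ker_braidProj_le_SQ n hw
  rw [SQ, Subgroup.normalClosure] at hw2
  refine (Subgroup.closure_induction
    (p := fun (g : BraidGroup n) (_ : g ∈ Subgroup.closure
      (Group.conjugatesOfSet ((PresentedGroup.mk (braidRels n)) '' (sqSet n)))) =>
      g ∈ MonoidHom.ker (braidProj n) ∧
        mirrorBar n (QuotientGroup.mk g) = (QuotientGroup.mk g : BraidGroup n ⧸ gammaB n 2)⁻¹)
    ?_ ?_ ?_ ?_ hw2).2
  · rintro g hg
    rw [Group.mem_conjugatesOfSet_iff] at hg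
    obtain ⟨s, hs, hconj⟩ := hg
    obtain ⟨u, rfl⟩ := isConj_iff.1 hconj
    obtain ⟨w0, ⟨i, rfl⟩, rfl⟩ := hs
    constructor
    · have hss : PresentedGroup.mk (braidRels n) (FreeGroup.of i ^ 2) ∈
          MonoidHom.ker (braidProj n) := sq_mem_ker n ⟨_, ⟨i, rfl⟩, rfl⟩
      exact Subgroup.Normal.conj_mem inferInstance _ hss u
    · -- mirrorBar of conjugate of square
      have hof : PresentedGroup.mk (braidRels n) (FreeGroup.of i) = PresentedGroup.of i := rfl
      have hmkmul : (QuotientGroup.mk (u * (PresentedGroup.mk (braidRels n))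
            ((fun i => FreeGroup.of i ^ 2) i) * u⁻¹) : BraidGroup n ⧸ gammaB n 2) =
          QuotientGroup.mk u *
            (QuotientGroup.mk (PresentedGroup.of i) : BraidGroup n ⧸ gammaB n 2) ^ 2 *
            (QuotientGroup.mk u : BraidGroup n ⧸ gammaB n 2)⁻¹ := rfl
      rw [hmkmul]
      set su : BraidGroup n ⧸ gammaB n 2 := QuotientGroup.mk u with hsu
      set si : BraidGroup n ⧸ gammaB n 2 := QuotientGroup.mk (PresentedGroup.of i) with hsi
      have hLHS : mirrorBar n (su * si ^ 2 * su⁻¹) =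
          mirrorBar n su * (si⁻¹) ^ 2 * (mirrorBar n su)⁻¹ := by
        rw [map_mul, map_mul, map_pow, map_inv]
        have hmsi : mirrorBar n si = si⁻¹ := by
          rw [hsi, mirrorBar_mk, mirror_of]; try rfl
        rw [hmsi]
      rw [hLHS]
      have hpi : braidProjBar n 2 ((si⁻¹) ^ 2) = 1 := by
        rw [map_pow, map_inv, hsi, braidProjBar_mk]
        have : braidProj n (PresentedGroup.of i) = braidGenPerm n i :=
          PresentedGroup.toGroup.of _
        rw [this, braidGenPerm, Equiv.swap_inv, sq, Equiv.swap_mul_self]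
      have hcc : mirrorBar n su * (si⁻¹) ^ 2 * (mirrorBar n su)⁻¹ =
          su * (si⁻¹) ^ 2 * su⁻¹ :=
        conj_pure_eq (braidProjBar_mirrorBar n su) hpi
      rw [hcc]
      group
  · constructor
    · exact one_mem _
    · rw [show (QuotientGroup.mk 1 : BraidGroup n ⧸ gammaB n 2) = 1 from rfl]
      simp
  · rintro a b _ _ ⟨ha1, ha2⟩ ⟨hb1, hb2⟩
    constructor
    · exact mul_mem ha1 hb1
    · have hma : braidProjBar n 2 ((QuotientGroup.mk a : BraidGroup n ⧸ gammaB n 2)⁻¹) = 1 := by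
        rw [map_inv]; rw [braidProjBar_mk]
        show (braidProj n a)⁻¹ = 1
        rw [ha1]; simp
      have hmb : braidProjBar n 2 ((QuotientGroup.mk b : BraidGroup n ⧸ gammaB n 2)⁻¹) = 1 := by
        rw [map_inv]; rw [braidProjBar_mk]
        show (braidProj n b)⁻¹ = 1
        rw [hb1]; simp
      have : (QuotientGroup.mk (a*b) : BraidGroup n ⧸ gammaB n 2) =
          QuotientGroup.mk a * QuotientGroup.mk b := rfl
      rw [this, map_mul, ha2, hb2, mul_inv_rev, pure_comm hma hmb]
  · rintro a _ ⟨ha1, ha2⟩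
    constructor
    · exact inv_mem ha1
    · have : (QuotientGroup.mk a⁻¹ : BraidGroup n ⧸ gammaB n 2) =
          (QuotientGroup.mk a : BraidGroup n ⧸ gammaB n 2)⁻¹ := rfl
      rw [this, map_inv, ha2]

end BraidEmb
namespace BraidEmb

lemma braidProjBar_surjective (n : ℕ) : Function.Surjective (braidProjBar n 2) := by
  intro σ
  obtain ⟨w, hw⟩ := braidProj_surjective n σ
  exact ⟨QuotientGroup.mk w, hw⟩

abbrev KQ (n : ℕ) : Subgroup (BraidGroup n ⧸ gammaB n 2) := MonoidHom.ker (braidProjBar n 2)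

lemma KQ_mem_iff {n : ℕ} (x : BraidGroup n ⧸ gammaB n 2) :
    x ∈ KQ n ↔ braidProjBar n 2 x = 1 := Iff.rfl

noncomputable instance KQcomm (n : ℕ) : CommGroup (KQ n) :=
  { (inferInstance : Group (KQ n)) with
    mul_comm := fun a b => Subtype.ext (pure_comm ((KQ_mem_iff _).1 a.2) ((KQ_mem_iff _).1 b.2)) }

noncomputable def actQ (n : ℕ) (q : BraidGroup n ⧸ gammaB n 2) : KQ n →* KQ n where
  toFun x := ⟨q * x * q⁻¹, by
    rw [KQ_mem_iff, map_mul, map_mul, map_inv, (KQ_mem_iff _).1 x.2]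
    simp⟩
  map_one' := by ext; simp
  map_mul' a b := by
    ext
    show q * ((a : BraidGroup n ⧸ gammaB n 2) * b) * q⁻¹ = (q * a * q⁻¹) * (q * b * q⁻¹)
    group

lemma actQ_coe {n : ℕ} (q : BraidGroup n ⧸ gammaB n 2) (x : KQ n) :
    ((actQ n q x : KQ n) : BraidGroup n ⧸ gammaB n 2) = q * x * q⁻¹ := rfl

section Split

variable (n : ℕ) {H : Type*} [Group H] (Φ : H →* Equiv.Perm (Fin n))

noncomputable def sec (g : H) : BraidGroup n ⧸ gammaB n 2 :=
  Function.surjInv (braidProjBar_surjective n) (Φ g)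

lemma sec_spec (g : H) : braidProjBar n 2 (sec n Φ g) = Φ g :=
  Function.surjInv_eq _ _

noncomputable def Pc (g h : H) : KQ n :=
  ⟨sec n Φ g * sec n Φ h * (sec n Φ (g*h))⁻¹, by
    rw [KQ_mem_iff, map_mul, map_mul, map_inv, sec_spec, sec_spec, sec_spec, map_mul]
    group⟩

lemma Pc_coe (g h : H) : ((Pc n Φ g h : KQ n) : BraidGroup n ⧸ gammaB n 2) =
    sec n Φ g * sec n Φ h * (sec n Φ (g*h))⁻¹ := rfl

noncomputable def fc (g : H) : KQ n :=
  ⟨sec n Φ g * (mirrorBar n (sec n Φ g))⁻¹, by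
    rw [KQ_mem_iff, map_mul, map_inv, braidProjBar_mirrorBar]
    simp⟩

lemma fc_coe (g : H) : ((fc n Φ g : KQ n) : BraidGroup n ⧸ gammaB n 2) =
    sec n Φ g * (mirrorBar n (sec n Φ g))⁻¹ := rfl

lemma Pc_cocycle (g h l : H) :
    Pc n Φ g h * Pc n Φ (g*h) l =
      actQ n (sec n Φ g) (Pc n Φ h l) * Pc n Φ g (h*l) := by
  apply Subtype.ext
  rw [Subgroup.coe_mul, Subgroup.coe_mul, actQ_coe, Pc_coe, Pc_coe, Pc_coe, Pc_coe,
    mul_assoc g h l]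
  group

-- the key identity using the mirror involution
lemma key2Q {n : ℕ} (a b c : BraidGroup n ⧸ gammaB n 2)
    (hab : braidProjBar n 2 c = braidProjBar n 2 a * braidProjBar n 2 b) :
    (a * (mirrorBar n a)⁻¹) * (a * (b * (mirrorBar n b)⁻¹) * a⁻¹) =
      (a * b * c⁻¹)^2 * (c * (mirrorBar n c)⁻¹) := by
  set Ea := mirrorBar n a with hEa
  set Eb := mirrorBar n b with hEb
  have hPpure : braidProjBar n 2 (a * b * c⁻¹) = 1 := by
    rw [map_mul, map_mul, map_inv, hab]
    group
  obtain ⟨P, hPdef⟩ : ∃ P, P = a * b * c⁻¹ := ⟨_, rfl⟩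
  have hPpure' : braidProjBar n 2 P = 1 := by rw [hPdef]; exact hPpure
  have hPinv : braidProjBar n 2 P⁻¹ = 1 := by rw [map_inv, hPpure']; simp
  have hc : c = P⁻¹ * (a * b) := by rw [hPdef]; group
  have hEc : mirrorBar n c = P * (Ea * Eb) := by
    rw [hc, map_mul, map_mul, mirrorBar_pure hPinv, inv_inv, hEa, hEb]
  -- purity facts
  have hpia : braidProjBar n 2 Ea = braidProjBar n 2 a := braidProjBar_mirrorBar n a
  have hpib : braidProjBar n 2 Eb = braidProjBar n 2 b := braidProjBar_mirrorBar n b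
  have hY : braidProjBar n 2 (a * (b * Eb⁻¹) * a⁻¹) = 1 := by
    rw [map_mul, map_mul, map_mul, map_inv, map_inv, hpib]
    group
  have hF : braidProjBar n 2 (a * Ea⁻¹) = 1 := by
    rw [map_mul, map_inv, hpia]
    group
  have hYF : braidProjBar n 2 ((a * (b * Eb⁻¹) * a⁻¹) * (a * Ea⁻¹)) = 1 := by
    rw [map_mul, hY, hF, mul_one]
  -- conjugation move
  have hconj : Ea⁻¹ * (a * (b * Eb⁻¹) * a⁻¹) * (Ea⁻¹)⁻¹ =
      a⁻¹ * (a * (b * Eb⁻¹) * a⁻¹) * (a⁻¹)⁻¹ :=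
    conj_pure_eq (by rw [map_inv, map_inv, hpia]) hY
  have hcomm : P * ((a * (b * Eb⁻¹) * a⁻¹) * (a * Ea⁻¹)) =
      ((a * (b * Eb⁻¹) * a⁻¹) * (a * Ea⁻¹)) * P := pure_comm hPpure' hYF
  calc (a * Ea⁻¹) * (a * (b * Eb⁻¹) * a⁻¹)
      = a * (Ea⁻¹ * (a * (b * Eb⁻¹) * a⁻¹) * (Ea⁻¹)⁻¹) * Ea⁻¹ := by group
    _ = a * (a⁻¹ * (a * (b * Eb⁻¹) * a⁻¹) * (a⁻¹)⁻¹) * Ea⁻¹ := by rw [hconj]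
    _ = (a * (b * Eb⁻¹) * a⁻¹) * (a * Ea⁻¹) := by group
    _ = (P * ((a * (b * Eb⁻¹) * a⁻¹) * (a * Ea⁻¹))) * P⁻¹ := by
        rw [hcomm]; group
    _ = P^2 * ((P⁻¹ * (a*b)) * (P * (Ea * Eb))⁻¹) := by
        rw [show ((P:BraidGroup n ⧸ gammaB n 2)^2) = P * P from sq P]
        group
    _ = (a * b * c⁻¹)^2 * (c * (mirrorBar n c)⁻¹) := by
        rw [hEc, hc]
        group

lemma fc_rel (g h : H) :
    fc n Φ g * actQ n (sec n Φ g) (fc n Φ h) = Pc n Φ g h ^ 2 * fc n Φ (g*h) := by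
  apply Subtype.ext
  rw [Subgroup.coe_mul, Subgroup.coe_mul, actQ_coe, fc_coe, fc_coe, fc_coe,
    SubmonoidClass.coe_pow, Pc_coe]
  exact key2Q (sec n Φ g) (sec n Φ h) (sec n Φ (g*h))
    (by rw [sec_spec, sec_spec, sec_spec, map_mul])

variable [Fintype H]

noncomputable def Nc (g : H) : KQ n := ∏ l : H, Pc n Φ g l

lemma Nc_rel (g h : H) :
    Pc n Φ g h ^ (Fintype.card H) * Nc n Φ (g*h) =
      actQ n (sec n Φ g) (Nc n Φ h) * Nc n Φ g := by
  have h1 : ∏ l : H, (Pc n Φ g h * Pc n Φ (g*h) l) =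
      ∏ l : H, (actQ n (sec n Φ g) (Pc n Φ h l) * Pc n Φ g (h*l)) :=
    Finset.prod_congr rfl fun l _ => Pc_cocycle n Φ g h l
  rw [Finset.prod_mul_distrib, Finset.prod_mul_distrib, Finset.prod_const,
    Finset.card_univ] at h1
  rw [← map_prod (actQ n (sec n Φ g)) _ Finset.univ] at h1
  have h2 : ∏ l : H, Pc n Φ g (h*l) = ∏ l : H, Pc n Φ g l :=
    Fintype.prod_equiv (Equiv.mulLeft h) _ _ (fun l => rfl)
  rw [h2] at h1
  exact h1

noncomputable def uc (g : H) : KQ n :=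
  fc n Φ g ^ (Fintype.card H / 2) * (Nc n Φ g)⁻¹

lemma comm_solve {K : Type*} [CommGroup K] (A B C D P F N' : K) (k : ℕ)
    (hfa : A*B = P^2*F) (hNr : P^(2*k+1) * N' = D * C) :
    (A^k * C⁻¹) * (B^k * D⁻¹) * P = F^k * N'⁻¹ := by
  have e1 : (A^k * C⁻¹) * (B^k * D⁻¹) * P = (A*B)^k * P * (D*C)⁻¹ := by
    rw [mul_pow]
    simp [mul_comm, mul_left_comm, mul_assoc]
  rw [e1, hfa, ← hNr, mul_inv_eq_iff_eq_mul, mul_pow, ← pow_mul]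
  simp only [mul_comm, mul_left_comm, mul_assoc, pow_succ]
  rw [mul_left_comm (F^k) N'⁻¹, mul_inv_cancel_left]

lemma uc_rel (hodd : Odd (Fintype.card H)) (g h : H) :
    uc n Φ g * actQ n (sec n Φ g) (uc n Φ h) * Pc n Φ g h = uc n Φ (g*h) := by
  obtain ⟨k, hk⟩ := hodd
  have hkk : Fintype.card H / 2 = k := by omega
  have h1 : uc n Φ g = fc n Φ g ^ k * (Nc n Φ g)⁻¹ := by rw [uc, hkk]
  have h2 : actQ n (sec n Φ g) (uc n Φ h) =
      (actQ n (sec n Φ g) (fc n Φ h)) ^ k * (actQ n (sec n Φ g) (Nc n Φ h))⁻¹ := by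
    rw [uc, map_mul, map_pow, map_inv, hkk]
  have h3 : uc n Φ (g*h) = fc n Φ (g*h) ^ k * (Nc n Φ (g*h))⁻¹ := by rw [uc, hkk]
  rw [h1, h2, h3]
  refine comm_solve _ _ _ _ _ _ _ k (fc_rel n Φ g h) ?_
  rw [← hk]
  exact Nc_rel n Φ g h

noncomputable def tauFun (g : H) : BraidGroup n ⧸ gammaB n 2 :=
  (uc n Φ g : BraidGroup n ⧸ gammaB n 2) * sec n Φ g

lemma tau_mul (hodd : Odd (Fintype.card H)) (g h : H) :
    tauFun n Φ g * tauFun n Φ h = tauFun n Φ (g*h) := by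
  have hsec : sec n Φ g * sec n Φ h = (Pc n Φ g h : BraidGroup n ⧸ gammaB n 2) *
      sec n Φ (g*h) := by
    rw [Pc_coe]; group
  have hmove : sec n Φ g * (uc n Φ h : BraidGroup n ⧸ gammaB n 2) =
      (actQ n (sec n Φ g) (uc n Φ h) : BraidGroup n ⧸ gammaB n 2) * sec n Φ g := by
    rw [actQ_coe]; group
  calc tauFun n Φ g * tauFun n Φ h
      = (uc n Φ g : BraidGroup n ⧸ gammaB n 2) *
          (sec n Φ g * (uc n Φ h : BraidGroup n ⧸ gammaB n 2)) * sec n Φ h := by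
        rw [tauFun, tauFun]; group
    _ = (uc n Φ g : BraidGroup n ⧸ gammaB n 2) *
          ((actQ n (sec n Φ g) (uc n Φ h) : BraidGroup n ⧸ gammaB n 2) * sec n Φ g) *
          sec n Φ h := by rw [hmove]
    _ = ((uc n Φ g * actQ n (sec n Φ g) (uc n Φ h) : KQ n) : BraidGroup n ⧸ gammaB n 2) *
          (sec n Φ g * sec n Φ h) := by push_cast; group
    _ = ((uc n Φ g * actQ n (sec n Φ g) (uc n Φ h) : KQ n) : BraidGroup n ⧸ gammaB n 2) *
          ((Pc n Φ g h : BraidGroup n ⧸ gammaB n 2) * sec n Φ (g*h)) := by rw [hsec]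
    _ = ((uc n Φ g * actQ n (sec n Φ g) (uc n Φ h) * Pc n Φ g h : KQ n) :
          BraidGroup n ⧸ gammaB n 2) * sec n Φ (g*h) := by
        push_cast; group
    _ = tauFun n Φ (g*h) := by rw [uc_rel n Φ hodd g h, tauFun]

theorem exists_lift (hodd : Odd (Fintype.card H)) :
    ∃ τ : H →* BraidGroup n ⧸ gammaB n 2, ∀ g, braidProjBar n 2 (τ g) = Φ g := by
  refine ⟨MonoidHom.mk' (tauFun n Φ) (fun g h => (tau_mul n Φ hodd g h).symm), fun g => ?_⟩
  show braidProjBar n 2 (tauFun n Φ g) = Φ g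
  rw [tauFun, map_mul, (KQ_mem_iff _).1 (uc n Φ g).2, one_mul, sec_spec]

end Split
end BraidEmb
namespace BraidEmb

noncomputable def zmodFin (N : ℕ) [NeZero N] : ZMod N ≃ Fin N where
  toFun x := ⟨x.val, ZMod.val_lt x⟩
  invFun i := (i.val : ZMod N)
  left_inv x := ZMod.natCast_rightInverse x
  right_inv i := by
    apply Fin.ext
    simp [ZMod.val_cast_of_lt i.isLt]

def permCongrHom {α β : Type*} (e : α ≃ β) : Equiv.Perm α →* Equiv.Perm β where
  toFun q := (e.symm.trans q).trans e
  map_one' := by ext x; simp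
  map_mul' q r := by ext x; simp [Equiv.Perm.mul_apply]

lemma permCongrHom_injective {α β : Type*} (e : α ≃ β) :
    Function.Injective (permCongrHom e) := by
  intro q r h
  ext x
  have := DFunLike.congr_fun h (e x)
  simp only [permCongrHom, MonoidHom.coe_mk, OneHom.coe_mk, Equiv.trans_apply,
    Equiv.symm_apply_apply] at this
  exact e.injective this

def transHom (N : ℕ) : Multiplicative (ZMod N) →* Equiv.Perm (ZMod N) where
  toFun a := Equiv.addLeft (Multiplicative.toAdd a)
  map_one' := by ext x; simp
  map_mul' a b := by
    ext x
    simp [Equiv.Perm.mul_apply, add_assoc]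

def autHom (N d : ℕ) (θ : Multiplicative (ZMod d) →* AddAut (ZMod N)) :
    Multiplicative (ZMod d) →* Equiv.Perm (ZMod N) where
  toFun h := (θ h).toEquiv
  map_one' := by ext x; simp; rfl
  map_mul' h₁ h₂ := by
    ext x
    simp [Equiv.Perm.mul_apply]; rfl

lemma sd_compat (N d : ℕ) (θ : Multiplicative (ZMod d) →* AddAut (ZMod N)) :
    ∀ g : Multiplicative (ZMod d),
      (transHom N).comp ((sdAction θ g).toMonoidHom) =
        (MulAut.conj (autHom N d θ g)).toMonoidHom.comp (transHom N) := by
  intro g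
  ext a x
  show Multiplicative.toAdd ((sdAction θ g) a) + x =
    ((autHom N d θ g) * (transHom N a) * (autHom N d θ g)⁻¹) x
  have h1 : Multiplicative.toAdd ((sdAction θ g) a) = (θ g) (Multiplicative.toAdd a) := rfl
  rw [h1]
  show (θ g) (Multiplicative.toAdd a) + x =
    (autHom N d θ g) ((transHom N a) (((autHom N d θ g))⁻¹ x))
  have h2 : ((autHom N d θ g))⁻¹ x = (θ g).symm x := rfl
  rw [h2]
  show ((θ g) (Multiplicative.toAdd a) : ZMod N) + x = (θ g) ((Multiplicative.toAdd a : ZMod N) + (θ g).symm x)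
  rw [map_add]
  simp

noncomputable def PhiSdp (N d : ℕ) (θ : Multiplicative (ZMod d) →* AddAut (ZMod N)) [NeZero N] :
    (Multiplicative (ZMod N)) ⋊[sdAction θ] (Multiplicative (ZMod d)) →*
      Equiv.Perm (Fin N) :=
  (permCongrHom (zmodFin N)).comp
    (SemidirectProduct.lift (transHom N) (autHom N d θ) (sd_compat N d θ))

lemma PhiSdp_injective (N d : ℕ) (θ : Multiplicative (ZMod d) →* AddAut (ZMod N)) [NeZero N]
    (hθ : Function.Injective θ) :
    Function.Injective (PhiSdp N d θ) := by
  refine (permCongrHom_injective (zmodFin N)).comp ?_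
  rw [injective_iff_map_eq_one]
  intro x hx
  have hx' : transHom N x.left * autHom N d θ x.right = 1 := hx
  have h0 := DFunLike.congr_fun hx' (0 : ZMod N)
  have h0' : Multiplicative.toAdd x.left + (θ x.right) 0 = 0 := h0
  rw [map_zero, add_zero] at h0'
  have hleft : x.left = 1 := by
    have : x.left = Multiplicative.ofAdd 0 := by
      rw [← h0']; rfl
    simpa using this
  rw [hleft, map_one, one_mul] at hx'
  have hright : x.right = 1 := by
    apply hθ
    rw [map_one]
    ext y
    exact DFunLike.congr_fun hx' y
  cases x with
  | mk l r =>
    simp only at hleft hright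
    rw [hleft, hright]
    rfl

def sdpEquivProd {N' G' : Type*} [Group N'] [Group G'] (φ : G' →* MulAut N') :
    (N' ⋊[φ] G') ≃ N' × G' where
  toFun x := (x.left, x.right)
  invFun p := ⟨p.1, p.2⟩
  left_inv x := by cases x; rfl
  right_inv p := rfl

end BraidEmb

/-- Let `p` be an odd prime, `r ≥ 1`, `d₁` an odd positive divisor of
`p − 1`, and `θ : ℤ/d₁ℤ → AddAut (ℤ/p^rℤ)` an injective homomorphism. Then the semidirect
product `(ℤ/p^rℤ) ⋊_θ (ℤ/d₁ℤ)` embeds in `B_{p^r}/Γ_2(P_{p^r})`. -/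
theorem embed_prime_power_gamma2 (p : ℕ) (hp : p.Prime) (hpodd : Odd p)
    (r : ℕ) (hr : 1 ≤ r) (d₁ : ℕ) (hd₁ : 1 ≤ d₁) (hd₁odd : Odd d₁) (hdvd : d₁ ∣ p - 1)
    (θ : Multiplicative (ZMod d₁) →* AddAut (ZMod (p ^ r)))
    (hθ : Function.Injective θ) :
    ∃ ι : (Multiplicative (ZMod (p ^ r))) ⋊[sdAction θ] (Multiplicative (ZMod d₁)) →*
        BraidGroup (p ^ r) ⧸ gammaB (p ^ r) 2, Function.Injective ι := by
  haveI : NeZero (p ^ r) := ⟨(pow_pos hp.pos r).ne'⟩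
  haveI : NeZero d₁ := ⟨by omega⟩
  letI : Fintype ((Multiplicative (ZMod (p ^ r))) ⋊[sdAction θ] (Multiplicative (ZMod d₁))) :=
    Fintype.ofEquiv _ (BraidEmb.sdpEquivProd (sdAction θ)).symm
  have hcard : Fintype.card
      ((Multiplicative (ZMod (p ^ r))) ⋊[sdAction θ] (Multiplicative (ZMod d₁))) =
      p ^ r * d₁ := by
    rw [Fintype.card_congr (BraidEmb.sdpEquivProd (sdAction θ)), Fintype.card_prod,
      Fintype.card_multiplicative, Fintype.card_multiplicative, ZMod.card, ZMod.card]
  have hodd : Odd (Fintype.card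
      ((Multiplicative (ZMod (p ^ r))) ⋊[sdAction θ] (Multiplicative (ZMod d₁)))) := by
    rw [hcard]
    exact (hpodd.pow).mul hd₁odd
  obtain ⟨τ, hτ⟩ := BraidEmb.exists_lift (p ^ r) (BraidEmb.PhiSdp (p ^ r) d₁ θ) hodd
  refine ⟨τ, fun x y hxy => ?_⟩
  apply BraidEmb.PhiSdp_injective (p ^ r) d₁ θ hθ
  rw [← hτ x, ← hτ y, hxy]
end
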